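/- The reusable-resource reward function is not submodular: there exist arrival times and a duration d such that the matching-count function r on three arrivals {1,2,3} satisfies r({1})=r({2})=r({3})=r({1,2})=r({2,3})=1 and r({1,3})=r({1,2,3})=2, and this function violates submodularity since r({1,2,3}) − r({2,3}) > r({1,2}) − r({2}). -/

import Mathlib

/-- The greedy matching process for a single reusable resource with usage duration `d`. -/
noncomputable def matchCount (d : ℝ) : List ℝ → Option ℝ → ℕ
  | [], _ => 0
  | t :: ts, none => 1 + matchCount d ts (some (t + d))
  | t :: ts, some free =>
      if free ≤ t then 1 + matchCount d ts (some (t + d)) else matchCount d ts free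

/-- `r S`: number of matches of the matching process run on the arrivals in `S` in time order. -/
noncomputable def matchReward {n : ℕ} (a : Fin n → ℝ) (d : ℝ) (S : Finset (Fin n)) : ℕ :=
  matchCount d ((S.sort (· ≤ ·)).map a) none

lemma sort01' : ({0,1} : Finset (Fin 3)).sort (· ≤ ·) = [0,1] := by
  rw [show ({0,1} : Finset (Fin 3)) = ([0,1] : List (Fin 3)).toFinset by decide]
  rw [List.toFinset_sort _ (by decide)]; decide
lemma sort12' : ({1,2} : Finset (Fin 3)).sort (· ≤ ·) = [1,2] := by
  rw [show ({1,2} : Finset (Fin 3)) = ([1,2] : List (Fin 3)).toFinset by decide]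
  rw [List.toFinset_sort _ (by decide)]; decide
lemma sort02' : ({0,2} : Finset (Fin 3)).sort (· ≤ ·) = [0,2] := by
  rw [show ({0,2} : Finset (Fin 3)) = ([0,2] : List (Fin 3)).toFinset by decide]
  rw [List.toFinset_sort _ (by decide)]; decide
lemma sort012' : ({0,1,2} : Finset (Fin 3)).sort (· ≤ ·) = [0,1,2] := by
  rw [show ({0,1,2} : Finset (Fin 3)) = ([0,1,2] : List (Fin 3)).toFinset by decide]
  rw [List.toFinset_sort _ (by decide)]; decide

/-- with duration `d = 3/2` and arrival times `1, 2, 3`, the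
matching-count function `r` takes the stated values and is not submodular:
`r({1,2,3}) − r({2,3}) > r({1,2}) − r({2})`. -/
theorem stmt_6 :
    ∃ (a : Fin 3 → ℝ) (d : ℝ), StrictMono a ∧
    a = ![1, 2, 3] ∧ d = 3/2 ∧
    (let r : Finset (Fin 3) → ℕ := matchReward a d
     r {0} = 1 ∧ r {1} = 1 ∧ r {2} = 1 ∧ r {0, 1} = 1 ∧ r {1, 2} = 1 ∧
     r {0, 2} = 2 ∧ r {0, 1, 2} = 2 ∧
     r {0, 1, 2} - r {1, 2} > r {0, 1} - r {1}) := by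
  refine ⟨![1, 2, 3], 3/2, ?_, rfl, rfl, ?_⟩
  · intro i j hij
    fin_cases i <;> fin_cases j <;> simp_all <;> norm_num
  · have h0 : matchReward ![(1:ℝ),2,3] (3/2) {0} = 1 := by
      rw [matchReward, Finset.sort_singleton]; norm_num [matchCount]
    have h1 : matchReward ![(1:ℝ),2,3] (3/2) {1} = 1 := by
      rw [matchReward, Finset.sort_singleton]; norm_num [matchCount]
    have h2 : matchReward ![(1:ℝ),2,3] (3/2) {2} = 1 := by
      rw [matchReward, Finset.sort_singleton]; norm_num [matchCount]
    have h01 : matchReward ![(1:ℝ),2,3] (3/2) {0,1} = 1 := by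
      rw [matchReward, sort01']; norm_num [matchCount]
    have h12 : matchReward ![(1:ℝ),2,3] (3/2) {1,2} = 1 := by
      rw [matchReward, sort12']; norm_num [matchCount, Matrix.cons_val_two]
    have h02 : matchReward ![(1:ℝ),2,3] (3/2) {0,2} = 2 := by
      rw [matchReward, sort02']; norm_num [matchCount, Matrix.cons_val_two]
    have h012 : matchReward ![(1:ℝ),2,3] (3/2) {0,1,2} = 2 := by
      rw [matchReward, sort012']; norm_num [matchCount, Matrix.cons_val_two]
    exact ⟨h0, h1, h2, h01, h12, h02, h012, by rw [h012, h12, h01, h1]; norm_num⟩
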